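/- Let G be a finite simple graph on vertex set {1,…,n} (no self-loops) in which every vertex has at least one neighbor, with adjacency matrix A and diagonal degree matrix D. Let P ∈ ℝ^{n×d} be adjacency-identifying, with witness matrices W^Q, W^K ∈ ℝ^{d×d}. Then for every ε > 0 there exist b > 0 and δ > 0 such that for every Q ∈ ℝ^{n×d} with ‖P − Q‖_F < δ, writing Q̃ = (1/√d_k)·(Q W^Q)(Q W^K)ᵀ, one has ‖softmax(b·Q̃) − D^{−1}A‖_F < ε. -/

import Mathlib

open Matrix

/-- Softmax of a real vector. -/
noncomputable def softmax {m : Type*} [Fintype m] (z : m → ℝ) (j : m) : ℝ :=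
  Real.exp (z j) / ∑ l, Real.exp (z l)

/-- Row-wise softmax of a matrix. -/
noncomputable def rowSoftmax {n m : Type*} [Fintype m] (Z : Matrix n m ℝ) : Matrix n m ℝ :=
  Matrix.of fun i j => softmax (Z i) j

/-- The Frobenius norm of a real matrix. -/
noncomputable def frobNorm {m n : Type*} [Fintype m] [Fintype n] (M : Matrix m n ℝ) : ℝ :=
  Real.sqrt (∑ i, ∑ j, (M i j) ^ 2)

/-- The unnormalized attention matrix `(1/√d_k)·(P W^Q)(P W^K)ᵀ`. -/
noncomputable def attn {n : ℕ} {m : Type*} [Fintype m] (dk : ℝ)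
    (P : Matrix (Fin n) m ℝ) (WQ WK : Matrix m m ℝ) : Matrix (Fin n) (Fin n) ℝ :=
  (1 / Real.sqrt dk) • ((P * WQ) * (P * WK)ᵀ)

open Filter in
lemma softmax_shift {n : ℕ} (b M : ℝ) (z : Fin n → ℝ) (j : Fin n) :
    softmax (b • z) j = Real.exp (b * (z j - M)) / ∑ l, Real.exp (b * (z l - M)) := by
  have h : ∀ l, Real.exp (b * (z l - M)) = Real.exp (b * z l) * Real.exp (-(b * M)) := by
    intro l; rw [← Real.exp_add]; congr 1; ring
  simp only [softmax, Pi.smul_apply, smul_eq_mul, h, ← Finset.sum_mul]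
  rw [mul_div_mul_right _ _ (Real.exp_ne_zero _)]

open Filter in
lemma softmax_tendsto {n : ℕ} (z : Fin n → ℝ) (j0 : Fin n) (hM : ∀ l, z l ≤ z j0)
    (S : Finset (Fin n)) (hS : ∀ l, l ∈ S ↔ z l = z j0) (j : Fin n) :
    Tendsto (fun b : ℝ => softmax (b • z) j) atTop
      (nhds ((if j ∈ S then 1 else 0) / (S.card : ℝ))) := by
  have hj0S : j0 ∈ S := (hS j0).mpr rfl
  have hcard : (0:ℝ) < S.card := by
    have h : 0 < S.card := Finset.card_pos.mpr ⟨j0, hj0S⟩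
    exact_mod_cast h
  have hterm : ∀ l : Fin n, Tendsto (fun b => Real.exp (b * (z l - z j0))) atTop
      (nhds (if l ∈ S then 1 else 0)) := by
    intro l
    by_cases hl : l ∈ S
    · simp only [hl, if_true]
      have hz : z l - z j0 = 0 := by rw [(hS l).mp hl]; ring
      simp [hz]
    · simp only [hl, if_false]
      have hlt : z l - z j0 < 0 :=
        sub_neg.mpr (lt_of_le_of_ne (hM l) (fun h => hl ((hS l).mpr h)))
      have h1 : Tendsto (fun b : ℝ => b * (z l - z j0)) atTop atBot :=
        tendsto_id.atTop_mul_const_of_neg hlt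
      exact Real.tendsto_exp_atBot.comp h1
  have hsum : (∑ l, (if l ∈ S then (1:ℝ) else 0)) = (S.card : ℝ) := by
    simp
  have hden : Tendsto (fun b => ∑ l, Real.exp (b * (z l - z j0))) atTop
      (nhds (S.card : ℝ)) := by
    rw [← hsum]
    exact tendsto_finset_sum _ fun l _ => hterm l
  have h := (hterm j).div hden (ne_of_gt hcard)
  exact h.congr fun b => (softmax_shift b (z j0) z j).symm

lemma dist_le_frob {n d : ℕ} (P Q : Fin n → Fin d → ℝ) :
    dist Q P ≤ frobNorm (Matrix.of P - Matrix.of Q) := by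
  have hnn : 0 ≤ frobNorm (Matrix.of P - Matrix.of Q) := Real.sqrt_nonneg _
  rw [dist_pi_le_iff hnn]
  intro i
  rw [dist_pi_le_iff hnn]
  intro j
  rw [Real.dist_eq]
  have h1 : ((Matrix.of P - Matrix.of Q) i j)^2 ≤ ∑ i', ∑ j', ((P - Q) i' j')^2 := by
    calc ((Matrix.of P - Matrix.of Q) i j)^2 ≤ ∑ j', ((Matrix.of P - Matrix.of Q) i j')^2 :=
          Finset.single_le_sum (f := fun j' => ((Matrix.of P - Matrix.of Q) i j')^2)
            (fun _ _ => sq_nonneg _) (Finset.mem_univ j)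
      _ ≤ ∑ i', ∑ j', ((Matrix.of P - Matrix.of Q) i' j')^2 :=
          Finset.single_le_sum
            (f := fun i' => ∑ j', ((Matrix.of P - Matrix.of Q) i' j')^2)
            (fun _ _ => Finset.sum_nonneg fun _ _ => sq_nonneg _) (Finset.mem_univ i)
  calc |Q i j - P i j| = Real.sqrt (((Matrix.of P - Matrix.of Q) i j)^2) := by
        rw [Real.sqrt_sq_eq_abs, Matrix.sub_apply, Matrix.of_apply, Matrix.of_apply,
          abs_sub_comm]
    _ ≤ frobNorm (Matrix.of P - Matrix.of Q) := Real.sqrt_le_sqrt h1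

open Filter in
/-- for an adjacency-identifying `P` (with witnesses `W^Q, W^K`), the row-wise
softmax of `b • Q̃` approximates the row-normalized adjacency matrix `D⁻¹A` for every `Q`
sufficiently close to `P` in Frobenius norm. -/
theorem stmt3 {n d : ℕ} (G : SimpleGraph (Fin n)) [DecidableRel G.Adj]
    (hdeg : ∀ v, 0 < G.degree v)
    (dk : ℝ) (hdk : 0 < dk)
    (P : Matrix (Fin n) (Fin d) ℝ) (WQ WK : Matrix (Fin d) (Fin d) ℝ)
    (hP : ∀ i j, (∀ l, attn dk P WQ WK i l ≤ attn dk P WQ WK i j) ↔ G.Adj i j)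
    (DinvA : Matrix (Fin n) (Fin n) ℝ)
    (hDinvA : ∀ i j, DinvA i j = G.adjMatrix ℝ i j / (G.degree i : ℝ)) :
    ∀ ε : ℝ, 0 < ε → ∃ b δ : ℝ, 0 < b ∧ 0 < δ ∧
      ∀ Q : Matrix (Fin n) (Fin d) ℝ, frobNorm (P - Q) < δ →
        frobNorm (rowSoftmax (b • attn dk Q WQ WK) - DinvA) < ε := by
  intro ε hε
  classical
  -- entrywise formula for attn
  have hattn_apply : ∀ (Q : Matrix (Fin n) (Fin d) ℝ) (i l : Fin n),
      attn dk Q WQ WK i l =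
        (1 / Real.sqrt dk) * ∑ k, (∑ a, Q i a * WQ a k) * (∑ a, Q l a * WK a k) := by
    intro Q i l
    simp only [attn, Matrix.smul_apply, Matrix.mul_apply, Matrix.transpose_apply,
      smul_eq_mul]
  -- continuity of each attn entry in Q
  have cont_attn : ∀ i l : Fin n, Continuous fun Q : Fin n → Fin d → ℝ =>
      attn dk Q WQ WK i l := by
    intro i l
    rw [show (fun Q : Fin n → Fin d → ℝ => attn dk Q WQ WK i l) = fun Q => (1 / Real.sqrt dk) * ∑ k, (∑ a, Q i a * WQ a k) * (∑ a, Q l a * WK a k) from funext fun Q => hattn_apply Q i l]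
    refine continuous_const.mul (continuous_finset_sum _ fun k _ => ?_)
    exact (continuous_finset_sum _ fun a _ =>
        (continuous_apply_apply i a).mul continuous_const).mul
      (continuous_finset_sum _ fun a _ =>
        (continuous_apply_apply l a).mul continuous_const)
  -- continuity of each softmax entry in Q, for fixed b
  have cont_entry : ∀ (b : ℝ) (i j : Fin n), Continuous fun Q : Fin n → Fin d → ℝ =>
      softmax ((b • attn dk Q WQ WK) i) j := by
    intro b i j
    have hnum : ∀ l : Fin n, Continuous fun Q : Fin n → Fin d → ℝ =>
        Real.exp (b * attn dk Q WQ WK i l) :=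
      fun l => Real.continuous_exp.comp (continuous_const.mul (cont_attn i l))
    have hform : (fun Q : Fin n → Fin d → ℝ => softmax ((b • attn dk Q WQ WK) i) j)
        = fun Q => Real.exp (b * attn dk Q WQ WK i j) /
            ∑ l, Real.exp (b * attn dk Q WQ WK i l) := by
      funext Q
      simp [softmax, Matrix.smul_apply, smul_eq_mul]
    rw [hform]
    refine (hnum j).div (continuous_finset_sum _ fun l _ => hnum l) ?_
    intro Q
    have : Nonempty (Fin n) := ⟨j⟩
    exact ne_of_gt (Finset.sum_pos (fun l _ => Real.exp_pos _) Finset.univ_nonempty)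
  -- continuity of the full Frobenius expression in Q, for fixed b
  have contF : ∀ b : ℝ, Continuous fun Q : Fin n → Fin d → ℝ =>
      frobNorm (rowSoftmax (b • attn dk Q WQ WK) - DinvA) := by
    intro b
    have hform : (fun Q : Fin n → Fin d → ℝ =>
        frobNorm (rowSoftmax (b • attn dk Q WQ WK) - DinvA))
        = fun Q => Real.sqrt (∑ i, ∑ j,
            (softmax ((b • attn dk Q WQ WK) i) j - DinvA i j)^2) := by
      funext Q
      simp [frobNorm, rowSoftmax, Matrix.sub_apply]
    rw [hform]
    exact Real.continuous_sqrt.comp (continuous_finset_sum _ fun i _ =>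
      continuous_finset_sum _ fun j _ => ((cont_entry b i j).sub continuous_const).pow 2)
  -- entrywise limit for Q = P as b → ∞
  have hlim : ∀ i j : Fin n, Tendsto (fun b : ℝ => softmax ((b • attn dk P WQ WK) i) j)
      atTop (nhds (DinvA i j)) := by
    intro i j
    obtain ⟨j0, hj0⟩ : ∃ j0, G.Adj i j0 := by
      obtain ⟨j0, hj0⟩ := Finset.card_pos.mp (hdeg i)
      exact ⟨j0, (SimpleGraph.mem_neighborFinset G i j0).mp hj0⟩
    set z : Fin n → ℝ := attn dk P WQ WK i with hz
    have hMax : ∀ l, z l ≤ z j0 := (hP i j0).mpr hj0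
    have hS : ∀ l, l ∈ G.neighborFinset i ↔ z l = z j0 := by
      intro l
      rw [SimpleGraph.mem_neighborFinset]
      constructor
      · intro h; exact le_antisymm (hMax l) ((hP i l).mpr h j0)
      · intro h; exact (hP i l).mp (fun k => le_of_le_of_eq (hMax k) h.symm)
    have h := softmax_tendsto z j0 hMax (G.neighborFinset i) hS j
    have hval : ((if j ∈ G.neighborFinset i then (1:ℝ) else 0) /
        ((G.neighborFinset i).card : ℝ)) = DinvA i j := by
      rw [hDinvA]
      rw [SimpleGraph.degree]
      congr 1
      simp [SimpleGraph.adjMatrix_apply, SimpleGraph.mem_neighborFinset]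
    rw [hval] at h
    exact h
  -- limit of the Frobenius norm as b → ∞
  have hfrob : Tendsto (fun b : ℝ =>
      frobNorm (rowSoftmax (b • attn dk P WQ WK) - DinvA)) atTop (nhds 0) := by
    have h0 : Tendsto (fun b : ℝ => ∑ i, ∑ j,
        (softmax ((b • attn dk P WQ WK) i) j - DinvA i j)^2) atTop (nhds 0) := by
      have hz : (0:ℝ) = ∑ _i : Fin n, ∑ _j : Fin n, (0:ℝ) := by simp
      rw [hz]
      refine tendsto_finset_sum _ fun i _ => tendsto_finset_sum _ fun j _ => ?_
      have h2 := ((hlim i j).sub (tendsto_const_nhds (x := DinvA i j))).pow 2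
      simpa using h2
    have h1 := (Real.continuous_sqrt.tendsto 0).comp h0
    simp only [Real.sqrt_zero] at h1
    refine h1.congr fun b => ?_
    simp [frobNorm, rowSoftmax, Matrix.sub_apply]
  -- choose b with the P-value below ε/2
  obtain ⟨b, hb0, hbP⟩ : ∃ b : ℝ, 0 < b ∧
      frobNorm (rowSoftmax (b • attn dk P WQ WK) - DinvA) < ε / 2 := by
    have h1 : ∀ᶠ b in atTop,
        frobNorm (rowSoftmax (b • attn dk P WQ WK) - DinvA) < ε / 2 :=
      hfrob.eventually (eventually_lt_nhds (half_pos hε))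
    exact ((eventually_gt_atTop 0).and h1).exists
  -- continuity at P gives δ
  have hc : ContinuousAt (fun Q : Fin n → Fin d → ℝ =>
      frobNorm (rowSoftmax (b • attn dk Q WQ WK) - DinvA)) P := (contF b).continuousAt
  replace hc := Metric.continuousAt_iff.mp hc
  obtain ⟨δ, hδ0, hδ⟩ := hc (ε / 2) (half_pos hε)
  refine ⟨b, δ, hb0, hδ0, fun Q hQ => ?_⟩
  have hdist : dist (show Fin n → Fin d → ℝ from Q) (show Fin n → Fin d → ℝ from P) < δ :=
    lt_of_le_of_lt (dist_le_frob P Q) hQ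
  have h2 := hδ hdist
  rw [Real.dist_eq] at h2
  have h3 := abs_lt.mp h2
  linarith [h3.1, h3.2]
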